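/- Consider the underdetermined least-squares problem with data matrix A ∈ ℝ^{m×n} (n > m) whose rows a_i satisfy ‖a_i‖ = √n and whose m-th singular value satisfies σ_m(A) ≥ √m, with b = A x* for the minimum-norm interpolant x* ∈ span{a₁,…,a_m}. Let x_k be generated by the aProx iteration applied to f_i(x) = (1/2)(⟨a_i, x⟩ − b_i)² with index i drawn uniformly at random at each step, using the truncated model f_x(y;i) = max{ f_i(x) + ⟨∇f_i(x), y − x⟩, 0 }, stepsizes α_k = α₀ k^{−β} with β ∈ (0,1), and initial point x₁ ∈ span{a₁,…,a_m}. Then there exists a constant C depending only on n, m, α₀, β such that for all k ∈ ℕ, E[‖x_k − x*‖²] ≤ C max{ exp(−k/m), exp(−(α₀/(1−β)) k^{1−β}) } · ‖x₁ − x*‖². -/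

import Mathlib

open MeasureTheory ProbabilityTheory
open scoped RealInnerProductSpace ENNReal

noncomputable section

lemma aux_indep14 {Ω : Type*} [MeasurableSpace Ω] {μ : Measure Ω} {m k : ℕ}
    (I : ℕ → Ω → Fin m) (hImeas : ∀ j, Measurable (I j))
    (hIindep : iIndepFun I μ)
    {E : Type*} [MeasurableSpace E] (φ : (Fin k → Fin m) → E) (X : Ω → E)
    (hX : ∀ ω, X ω = φ (fun j => I j ω)) : IndepFun X (I k) μ := by
  classical
  set S : Finset ℕ := Finset.range k with hS
  set T : Finset ℕ := {k} with hT
  have h1 : IndepFun (fun ω (j : S) => I j ω) (fun ω (j : T) => I j ω) μ :=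
    hIindep.indepFun_finset S T (by simp [hS, hT]) hImeas
  set Φ : (S → Fin m) → E := fun g => φ (fun j : Fin k => g ⟨(j : ℕ), Finset.mem_range.2 j.2⟩) with hΦ
  set Ψ : (T → Fin m) → Fin m := fun g => g ⟨k, Finset.mem_singleton_self k⟩ with hΨ
  have h2 : IndepFun (Φ ∘ fun ω (j : S) => I j ω) (Ψ ∘ fun ω (j : T) => I j ω) μ :=
    h1.comp (measurable_of_countable _) (measurable_of_countable _)
  have e1 : X = Φ ∘ fun ω (j : S) => I j ω := funext fun ω => hX ω
  have e2 : I k = Ψ ∘ fun ω (j : T) => I j ω := rfl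
  rw [e1, e2]
  exact h2

set_option maxHeartbeats 1000000 in
/-- Corollary 4.6 (interpolation / underdetermined least squares): for a feasible linear
system `⟨a_i, x⟩ = b_i` (`n > m`) with rows of norm `√n` and `m`-th singular value at least
`√m` (expressed as `‖Av‖² ≥ m‖v‖²` on the row span), the aProx iteration with the truncated
model for `f_i(x) = ½(⟨a_i,x⟩ - b_i)²`, a uniformly random index at each step, stepsizes
`α_k = α₀ k^{-β}` with `β ∈ (0,1)`, and `x₁` in the row span, satisfies
`E‖x_k - x*‖² ≤ C max{e^{-k/m}, e^{-(α₀/(1-β)) k^{1-β}}} ‖x₁ - x*‖²` for a constant `C`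
depending only on `n, m, α₀, β`, where `x*` is the minimum-norm interpolant. -/
theorem stmt14 {n m : ℕ} (hnm : m < n) (hm : 0 < m)
    (a : Fin m → EuclideanSpace ℝ (Fin n)) (b : Fin m → ℝ)
    (hrownorm : ∀ i, ‖a i‖ = Real.sqrt n)
    (hsigma : ∀ v ∈ Submodule.span ℝ (Set.range a),
      (m : ℝ) * ‖v‖ ^ 2 ≤ ∑ i, ⟪a i, v⟫ ^ 2)
    (xstar : EuclideanSpace ℝ (Fin n))
    (hxstar_span : xstar ∈ Submodule.span ℝ (Set.range a))
    (hinterp : ∀ i, ⟪a i, xstar⟫ = b i)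
    {Ω : Type*} [MeasurableSpace Ω] (μ : Measure Ω) [IsProbabilityMeasure μ]
    (I : ℕ → Ω → Fin m) (hImeas : ∀ k, Measurable (I k))
    (hIindep : iIndepFun I μ)
    (hIunif : ∀ k j, μ {ω | I k ω = j} = (m : ℝ≥0∞)⁻¹)
    (α₀ β : ℝ) (hα₀ : 0 < α₀) (hβ : β ∈ Set.Ioo (0 : ℝ) 1)
    (α : ℕ → ℝ) (hα : ∀ k : ℕ, α k = α₀ * (k : ℝ) ^ (-β))
    (x₁ : EuclideanSpace ℝ (Fin n)) (hx₁span : x₁ ∈ Submodule.span ℝ (Set.range a))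
    (x : ℕ → Ω → EuclideanSpace ℝ (Fin n))
    (hxmeas : ∀ k, Measurable (x k))
    (hxinit : ∀ ω, x 1 ω = x₁)
    (hupdate : ∀ k, 1 ≤ k → ∀ ω,
      x (k + 1) ω = x k ω -
        (min (α k)
            ((1 / 2) * (⟪a (I k ω), x k ω⟫ - b (I k ω)) ^ 2 /
              ‖(⟪a (I k ω), x k ω⟫ - b (I k ω)) • a (I k ω)‖ ^ 2)) •
          ((⟪a (I k ω), x k ω⟫ - b (I k ω)) • a (I k ω))) :
    ∃ C : ℝ, ∀ k, 1 ≤ k →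
      (∫ ω, ‖x k ω - xstar‖ ^ 2 ∂μ) ≤
        C * max (Real.exp (-(k : ℝ) / m))
            (Real.exp (-(α₀ / (1 - β)) * (k : ℝ) ^ (1 - β))) *
          ‖x₁ - xstar‖ ^ 2 := by
  obtain ⟨hβ0, hβ1⟩ := hβ
  have hn : (0:ℝ) < n := by
    have : (0:ℕ) < n := lt_trans hm hnm
    exact_mod_cast this
  set c : ℝ := 1 / (2 * n) with hc
  have hc0 : 0 < c := by positivity
  have hcn : c * n = 1 / 2 := by rw [hc]; field_simp
  set t : ℕ → ℝ := fun k => min (α k) c with ht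
  have hαpos : ∀ k : ℕ, 1 ≤ k → 0 < α k := by
    intro k hk
    rw [hα]
    have : (0:ℝ) < (k:ℝ) := by exact_mod_cast hk
    positivity
  have ht0 : ∀ k, 1 ≤ k → 0 < t k := fun k hk => lt_min (hαpos k hk) hc0
  have htc : ∀ k, t k ≤ c := fun k => min_le_right _ _
  have hna : ∀ i, ‖a i‖ ^ 2 = n := by
    intro i
    rw [hrownorm i, Real.sq_sqrt (le_of_lt hn)]
  -- the residual equals the inner product with the error
  have hres : ∀ i (y : EuclideanSpace ℝ (Fin n)), ⟪a i, y⟫ - b i = ⟪a i, y - xstar⟫ := by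
    intro i y
    rw [inner_sub_right, hinterp i]
  -- Step A : key pointwise inequality
  have hkey : ∀ k, 1 ≤ k → ∀ ω,
      ‖x (k+1) ω - xstar‖ ^ 2 ≤
        ‖x k ω - xstar‖ ^ 2 - t k * ⟪a (I k ω), x k ω - xstar⟫ ^ 2 := by
    intro k hk ω
    set i := I k ω
    set r : ℝ := ⟪a i, x k ω⟫ - b i with hrdef
    have hri : r = ⟪a i, x k ω - xstar⟫ := hres i (x k ω)
    rcases eq_or_ne r 0 with h0 | h0
    · have hx' : x (k+1) ω = x k ω := by
        rw [hupdate k hk ω, ← hrdef, h0]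
        simp
      rw [hx', ← hri, h0]
      simp
    · have hnrm : ‖r • a i‖ ^ 2 = r ^ 2 * n := by
        rw [norm_smul, mul_pow, hna i]
        simp [sq_abs]
      have hmin : (1 / 2) * r ^ 2 / ‖r • a i‖ ^ 2 = c := by
        rw [hnrm, hc]
        field_simp
      have hx' : x (k+1) ω = (x k ω - xstar) - (t k * r) • a i + xstar := by
        rw [hupdate k hk ω, ← hrdef, hmin, smul_smul, ht]
        abel_nf
        rfl
      have hnrm2 : ‖(t k * r) • a i‖ ^ 2 = (t k * r) ^ 2 * n := by
        rw [norm_smul, mul_pow, hna i, Real.norm_eq_abs, sq_abs]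
      have hexp : ‖x (k+1) ω - xstar‖ ^ 2 =
          ‖x k ω - xstar‖ ^ 2 - 2 * (t k * r) * r + (t k * r) ^ 2 * n := by
        rw [hx']
        simp only [add_sub_cancel_right]
        rw [norm_sub_sq_real, hnrm2, real_inner_smul_right,
          real_inner_comm (a i) (x k ω - xstar), ← hri]
        ring
      rw [hexp, ← hri]
      have htk0 : 0 < t k := ht0 k hk
      have htkn : t k * n ≤ 1 / 2 := by
        calc t k * n ≤ c * n :=
              mul_le_mul_of_nonneg_right (htc k) (le_of_lt hn)
          _ = 1 / 2 := hcn
      have haux : (t k * r ^ 2) * (t k * n) ≤ (t k * r ^ 2) * (1 / 2) :=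
        mul_le_mul_of_nonneg_left htkn (mul_nonneg htk0.le (sq_nonneg r))
      nlinarith [mul_nonneg htk0.le (sq_nonneg r)]
  -- Step B : iterates stay in the span
  have hspan : ∀ k, 1 ≤ k → ∀ ω, x k ω ∈ Submodule.span ℝ (Set.range a) := by
    intro k hk
    induction k, hk using Nat.le_induction with
    | base => intro ω; rw [hxinit ω]; exact hx₁span
    | succ k hk ih =>
      intro ω
      rw [hupdate k hk ω]
      exact Submodule.sub_mem _ (ih ω)
        (Submodule.smul_mem _ _ (Submodule.smul_mem _ _
          (Submodule.subset_span ⟨I k ω, rfl⟩)))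
  -- Step C : pointwise boundedness
  have hmono : ∀ k, 1 ≤ k → ∀ ω, ‖x k ω - xstar‖ ≤ ‖x₁ - xstar‖ := by
    intro k hk
    induction k, hk using Nat.le_induction with
    | base => intro ω; rw [hxinit ω]
    | succ k hk ih =>
      intro ω
      have h1 := hkey k hk ω
      have h2 : t k * ⟪a (I k ω), x k ω - xstar⟫ ^ 2 ≥ 0 :=
        mul_nonneg (le_of_lt (ht0 k hk)) (sq_nonneg _)
      have h3 : ‖x (k+1) ω - xstar‖ ^ 2 ≤ ‖x k ω - xstar‖ ^ 2 := by linarith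
      calc ‖x (k+1) ω - xstar‖ ≤ ‖x k ω - xstar‖ := by
            nlinarith [norm_nonneg (x (k+1) ω - xstar), norm_nonneg (x k ω - xstar)]
        _ ≤ ‖x₁ - xstar‖ := ih ω
  set B : ℝ := ‖x₁ - xstar‖ with hB
  have hBnn : 0 ≤ B := norm_nonneg _
  have hemeas : ∀ k, Measurable fun ω => x k ω - xstar :=
    fun k => (hxmeas k).sub measurable_const
  have hint_norm : ∀ k, 1 ≤ k → Integrable (fun ω => ‖x k ω - xstar‖ ^ 2) μ := by
    intro k hk
    refine Integrable.mono' (integrable_const (B ^ 2))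
      (((hemeas k).norm.pow_const 2).aestronglyMeasurable) ?_
    filter_upwards with ω
    rw [Real.norm_eq_abs, abs_of_nonneg (by positivity)]
    exact pow_le_pow_left₀ (norm_nonneg _) (hmono k hk ω) 2
  have hmeas_g : ∀ (i : Fin m) k, Measurable fun ω => ⟪a i, x k ω - xstar⟫ ^ 2 :=
    fun i k => (measurable_const.inner (hemeas k)).pow_const 2
  have hg_bd : ∀ (i : Fin m) k, 1 ≤ k → ∀ ω, ⟪a i, x k ω - xstar⟫ ^ 2 ≤ n * B ^ 2 := by
    intro i k hk ω
    have h1 := abs_real_inner_le_norm (a i) (x k ω - xstar)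
    calc ⟪a i, x k ω - xstar⟫ ^ 2 ≤ (‖a i‖ * ‖x k ω - xstar‖) ^ 2 := by
          rw [← sq_abs]
          exact pow_le_pow_left₀ (abs_nonneg _) h1 2
      _ = n * ‖x k ω - xstar‖ ^ 2 := by rw [mul_pow, hna i]
      _ ≤ n * B ^ 2 := by
          exact mul_le_mul_of_nonneg_left
            (pow_le_pow_left₀ (norm_nonneg _) (hmono k hk ω) 2) hn.le
  have hint_g : ∀ (i : Fin m) k, 1 ≤ k →
      Integrable (fun ω => ⟪a i, x k ω - xstar⟫ ^ 2) μ := by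
    intro i k hk
    refine Integrable.mono' (integrable_const ((n : ℝ) * B ^ 2))
      ((hmeas_g i k).aestronglyMeasurable) ?_
    filter_upwards with ω
    rw [Real.norm_eq_abs, abs_of_nonneg (sq_nonneg _)]
    exact hg_bd i k hk ω
  have hind_meas : ∀ k (i : Fin m),
      Measurable fun ω => (if I k ω = i then (1:ℝ) else 0) :=
    fun k i => (measurable_of_countable
      (fun j : Fin m => if j = i then (1:ℝ) else 0)).comp (hImeas k)
  have hint_prod : ∀ k, 1 ≤ k → ∀ i : Fin m,
      Integrable (fun ω => (if I k ω = i then (1:ℝ) else 0) *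
        ⟪a i, x k ω - xstar⟫ ^ 2) μ := by
    intro k hk i
    refine Integrable.mono' (integrable_const ((n : ℝ) * B ^ 2))
      (((hind_meas k i).mul (hmeas_g i k)).aestronglyMeasurable) ?_
    filter_upwards with ω
    rw [Real.norm_eq_abs, abs_mul]
    have h1 : |if I k ω = i then (1:ℝ) else 0| ≤ 1 := by split <;> simp
    have h2 : |⟪a i, x k ω - xstar⟫ ^ 2| ≤ n * B ^ 2 := by
      rw [abs_of_nonneg (sq_nonneg _)]; exact hg_bd i k hk ω
    calc |if I k ω = i then (1:ℝ) else 0| * |⟪a i, x k ω - xstar⟫ ^ 2|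
        ≤ 1 * (n * B ^ 2) := mul_le_mul h1 h2 (abs_nonneg _) one_pos.le
      _ = n * B ^ 2 := one_mul _
  have hind : ∀ k ω, ⟪a (I k ω), x k ω - xstar⟫ ^ 2 =
      ∑ i : Fin m, (if I k ω = i then (1:ℝ) else 0) * ⟪a i, x k ω - xstar⟫ ^ 2 := by
    intro k ω
    simp [ite_mul]
  have hintI : ∀ k, 1 ≤ k →
      Integrable (fun ω => ⟪a (I k ω), x k ω - xstar⟫ ^ 2) μ := by
    intro k hk
    have heq : (fun ω => ⟪a (I k ω), x k ω - xstar⟫ ^ 2) =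
        fun ω => ∑ i : Fin m, (if I k ω = i then (1:ℝ) else 0) *
          ⟪a i, x k ω - xstar⟫ ^ 2 := funext (hind k)
    rw [heq]
    exact integrable_finset_sum _ (fun i _ => hint_prod k hk i)
  -- x k is a function of I 0, ..., I (k-1)
  have hphi : ∀ k, 1 ≤ k → ∃ φ : (Fin k → Fin m) → EuclideanSpace ℝ (Fin n),
      ∀ ω, x k ω = φ (fun j => I j ω) := by
    intro k hk
    induction k, hk using Nat.le_induction with
    | base => exact ⟨fun _ => x₁, fun ω => hxinit ω⟩
    | succ k hk ih =>
      obtain ⟨φ, hφ⟩ := ih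
      refine ⟨fun g =>
        (fun y (i : Fin m) => y - (min (α k)
            ((1 / 2) * (⟪a i, y⟫ - b i) ^ 2 / ‖(⟪a i, y⟫ - b i) • a i‖ ^ 2)) •
          ((⟪a i, y⟫ - b i) • a i))
          (φ (fun j => g j.castSucc)) (g (Fin.last k)), ?_⟩
      intro ω
      rw [hupdate k hk ω, hφ ω]
      simp [Fin.coe_castSucc, Fin.val_last]
  have hindepXk : ∀ k, 1 ≤ k → IndepFun (x k) (I k) μ := by
    intro k hk
    obtain ⟨φ, hφ⟩ := hphi k hk
    exact aux_indep14 I hImeas hIindep φ (x k) hφ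
  -- expectation splitting via independence
  have hsplit : ∀ k, 1 ≤ k → ∀ i : Fin m,
      ∫ ω, (if I k ω = i then (1:ℝ) else 0) * ⟪a i, x k ω - xstar⟫ ^ 2 ∂μ
        = (m : ℝ)⁻¹ * ∫ ω, ⟪a i, x k ω - xstar⟫ ^ 2 ∂μ := by
    intro k hk i
    have hX : IndepFun (fun ω => ⟪a i, x k ω - xstar⟫ ^ 2)
        (fun ω => (if I k ω = i then (1:ℝ) else 0)) μ := by
      have h := (hindepXk k hk).comp
        (φ := fun y : EuclideanSpace ℝ (Fin n) => ⟪a i, y - xstar⟫ ^ 2)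
        (ψ := fun j : Fin m => if j = i then (1:ℝ) else 0)
        ((measurable_const.inner (measurable_id.sub measurable_const)).pow_const 2)
        (measurable_of_countable _)
      exact h
    have hmul := hX.integral_mul_eq_mul_integral (hmeas_g i k).aestronglyMeasurable
      (hind_meas k i).aestronglyMeasurable
    have hY : ∫ ω, (if I k ω = i then (1:ℝ) else 0) ∂μ = (m : ℝ)⁻¹ := by
      have hset : (fun ω => if I k ω = i then (1:ℝ) else 0) =
          Set.indicator (I k ⁻¹' {i}) (fun _ => (1:ℝ)) := by
        funext ω
        by_cases h : I k ω = i <;> simp [Set.indicator_apply, Set.mem_preimage, h]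
      rw [hset, integral_indicator_const (1:ℝ)
        (hImeas k (measurableSet_singleton i))]
      have hμ : μ (I k ⁻¹' {i}) = (m : ℝ≥0∞)⁻¹ := hIunif k i
      rw [measureReal_def, hμ]
      simp [ENNReal.toReal_inv]
    have h1 : (fun ω => (if I k ω = i then (1:ℝ) else 0) * ⟪a i, x k ω - xstar⟫ ^ 2) =
        (fun ω => ⟪a i, x k ω - xstar⟫ ^ 2) * (fun ω => if I k ω = i then (1:ℝ) else 0) := by
      funext ω
      exact mul_comm _ _
    rw [show (∫ ω, (if I k ω = i then (1:ℝ) else 0) * ⟪a i, x k ω - xstar⟫ ^ 2 ∂μ) =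
      ∫ ω, ((fun ω => ⟪a i, x k ω - xstar⟫ ^ 2) * (fun ω => if I k ω = i then (1:ℝ) else 0)) ω ∂μ
      from congrArg (integral μ) h1, hmul, hY, mul_comm]
  have hEinner : ∀ k, 1 ≤ k →
      (∫ ω, ‖x k ω - xstar‖ ^ 2 ∂μ) ≤ ∫ ω, ⟪a (I k ω), x k ω - xstar⟫ ^ 2 ∂μ := by
    intro k hk
    have hsum : (∫ ω, ⟪a (I k ω), x k ω - xstar⟫ ^ 2 ∂μ)
        = ∑ i : Fin m, ∫ ω, (if I k ω = i then (1:ℝ) else 0) *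
            ⟪a i, x k ω - xstar⟫ ^ 2 ∂μ := by
      have e : (∫ ω, ⟪a (I k ω), x k ω - xstar⟫ ^ 2 ∂μ)
          = ∫ ω, (∑ i : Fin m, (if I k ω = i then (1:ℝ) else 0) *
              ⟪a i, x k ω - xstar⟫ ^ 2) ∂μ :=
        integral_congr_ae (Filter.Eventually.of_forall (hind k))
      rw [e, integral_finset_sum _ (fun i _ => hint_prod k hk i)]
    have h2 : ∑ i : Fin m, ∫ ω, (if I k ω = i then (1:ℝ) else 0) *
          ⟪a i, x k ω - xstar⟫ ^ 2 ∂μ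
        = (m:ℝ)⁻¹ * ∫ ω, (∑ i : Fin m, ⟪a i, x k ω - xstar⟫ ^ 2) ∂μ := by
      rw [integral_finset_sum _ (fun i _ => hint_g i k hk), Finset.mul_sum]
      exact Finset.sum_congr rfl (fun i _ => hsplit k hk i)
    rw [hsum, h2]
    have hm' : (0:ℝ) < m := by exact_mod_cast hm
    have hpt : ∀ ω, ‖x k ω - xstar‖ ^ 2 ≤
        (m:ℝ)⁻¹ * ∑ i : Fin m, ⟪a i, x k ω - xstar⟫ ^ 2 := by
      intro ω
      have hv : x k ω - xstar ∈ Submodule.span ℝ (Set.range a) :=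
        Submodule.sub_mem _ (hspan k hk ω) hxstar_span
      have h3 := hsigma _ hv
      calc ‖x k ω - xstar‖ ^ 2 = (m:ℝ)⁻¹ * ((m:ℝ) * ‖x k ω - xstar‖ ^ 2) := by
            field_simp
        _ ≤ (m:ℝ)⁻¹ * ∑ i : Fin m, ⟪a i, x k ω - xstar⟫ ^ 2 :=
            mul_le_mul_of_nonneg_left h3 (inv_nonneg.2 hm'.le)
    have hintsum : Integrable
        (fun ω => (m:ℝ)⁻¹ * ∑ i : Fin m, ⟪a i, x k ω - xstar⟫ ^ 2) μ :=
      (integrable_finset_sum _ (fun i _ => hint_g i k hk)).const_mul _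
    calc (∫ ω, ‖x k ω - xstar‖ ^ 2 ∂μ)
        ≤ ∫ ω, (m:ℝ)⁻¹ * ∑ i : Fin m, ⟪a i, x k ω - xstar⟫ ^ 2 ∂μ :=
          integral_mono (hint_norm k hk) hintsum hpt
      _ = (m:ℝ)⁻¹ * ∫ ω, (∑ i : Fin m, ⟪a i, x k ω - xstar⟫ ^ 2) ∂μ :=
          integral_const_mul _ _
  set M : ℕ → ℝ := fun k => ∫ ω, ‖x k ω - xstar‖ ^ 2 ∂μ with hMdef
  have hrec : ∀ k, 1 ≤ k → M (k+1) ≤ (1 - t k) * M k := by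
    intro k hk
    have hint1 := hint_norm (k+1) (le_trans hk (Nat.le_succ k))
    have hintI' := hintI k hk
    have step1 : M (k+1) ≤
        ∫ ω, (‖x k ω - xstar‖ ^ 2 - t k * ⟪a (I k ω), x k ω - xstar⟫ ^ 2) ∂μ :=
      integral_mono hint1 ((hint_norm k hk).sub (hintI'.const_mul (t k)))
        (fun ω => hkey k hk ω)
    rw [integral_sub (hint_norm k hk) (hintI'.const_mul _), integral_const_mul _] at step1
    have h4 := mul_le_mul_of_nonneg_left (hEinner k hk) (ht0 k hk).le
    have : M (k+1) ≤ M k - t k * M k := by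
      simp only [hMdef] at step1 ⊢
      linarith
    linarith [this]
  have hM1 : M 1 = B ^ 2 := by
    have e : (fun ω => ‖x 1 ω - xstar‖ ^ 2) = fun _ => B ^ 2 :=
      funext fun ω => by rw [hxinit ω]
    simp only [hMdef, e, integral_const, measure_univ, ENNReal.toReal_one, probReal_univ, smul_eq_mul, one_mul]
  have hn1 : (1:ℝ) ≤ n := by
    have : (1:ℕ) ≤ n := le_of_lt (lt_of_le_of_lt hm hnm)
    exact_mod_cast this
  have hc12 : c ≤ 1 / 2 := by
    rw [hc]
    rw [div_le_div_iff₀ (by positivity) (by norm_num)]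
    linarith
  have ht1 : ∀ j, 1 ≤ j → 0 ≤ 1 - t j := by
    intro j hj
    have := htc j
    linarith [hc12]
  have hMprod : ∀ k, 1 ≤ k →
      M k ≤ (∏ j ∈ Finset.Ico 1 k, (1 - t j)) * B ^ 2 := by
    intro k hk
    induction k, hk using Nat.le_induction with
    | base => simp [hM1]
    | succ k hk ih =>
      calc M (k+1) ≤ (1 - t k) * M k := hrec k hk
        _ ≤ (1 - t k) * ((∏ j ∈ Finset.Ico 1 k, (1 - t j)) * B ^ 2) :=
            mul_le_mul_of_nonneg_left ih (ht1 k hk)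
        _ = (∏ j ∈ Finset.Ico 1 (k+1), (1 - t j)) * B ^ 2 := by
            rw [Finset.prod_Ico_succ_top hk]
            ring
  have hprodexp : ∀ k : ℕ,
      (∏ j ∈ Finset.Ico 1 k, (1 - t j)) ≤
        Real.exp (-(∑ j ∈ Finset.Ico 1 k, t j)) := by
    intro k
    calc (∏ j ∈ Finset.Ico 1 k, (1 - t j))
        ≤ ∏ j ∈ Finset.Ico 1 k, Real.exp (-(t j)) := by
          apply Finset.prod_le_prod
          · intro j hj
            exact ht1 j (Finset.mem_Ico.1 hj).1
          · intro j hj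
            linarith [Real.add_one_le_exp (-(t j))]
      _ = Real.exp (∑ j ∈ Finset.Ico 1 k, -(t j)) := (Real.exp_sum _ _).symm
      _ = Real.exp (-(∑ j ∈ Finset.Ico 1 k, t j)) := by rw [← Finset.sum_neg_distrib]
  -- deterministic estimates on the stepsizes
  set N : ℕ := ⌈((2:ℝ) * n * α₀) ^ (β⁻¹)⌉₊ with hN
  have hz0 : (0:ℝ) ≤ 2 * n * α₀ := by positivity
  have hαc : ∀ j : ℕ, N < j → α j ≤ c := by
    intro j hj
    have hzj : ((2:ℝ) * n * α₀) ^ (β⁻¹) ≤ (j:ℝ) := by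
      calc ((2:ℝ) * n * α₀) ^ (β⁻¹) ≤ (N:ℝ) := Nat.le_ceil _
        _ ≤ (j:ℝ) := by exact_mod_cast hj.le
    have hjpos : (0:ℝ) < (j:ℝ) := by
      have : 0 < j := lt_of_le_of_lt (Nat.zero_le N) hj
      exact_mod_cast this
    have hjβ : 2 * (n:ℝ) * α₀ ≤ (j:ℝ) ^ β := by
      have h1 : (((2:ℝ) * n * α₀) ^ (β⁻¹)) ^ β ≤ (j:ℝ) ^ β :=
        Real.rpow_le_rpow (Real.rpow_nonneg hz0 _) hzj hβ0.le
      rwa [← Real.rpow_mul hz0, inv_mul_cancel₀ (ne_of_gt hβ0), Real.rpow_one] at h1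
    have hjβpos : (0:ℝ) < (j:ℝ) ^ β := Real.rpow_pos_of_pos hjpos β
    rw [hα j, Real.rpow_neg hjpos.le, ← div_eq_mul_inv, hc,
      div_le_div_iff₀ hjβpos (by positivity)]
    nlinarith [hjβ]
  have ht_ge : ∀ j : ℕ, 1 ≤ j →
      α₀ * (j:ℝ) ^ (-β) - (if j ≤ N then α₀ else 0) ≤ t j := by
    intro j hj
    by_cases hjN : j ≤ N
    · rw [if_pos hjN]
      have h1 : (j:ℝ) ^ (-β) ≤ 1 :=
        Real.rpow_le_one_of_one_le_of_nonpos (by exact_mod_cast hj) (neg_nonpos.2 hβ0.le)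
      have h2 := (ht0 j hj).le
      nlinarith [hα₀.le]
    · rw [if_neg hjN, sub_zero, ← hα j]
      exact le_of_eq (min_eq_left (hαc j (lt_of_not_ge hjN))).symm
  have hite : ∀ k : ℕ, ∑ j ∈ Finset.Ico 1 k, (if j ≤ N then α₀ else 0) ≤ α₀ * N := by
    intro k
    rw [← Finset.sum_filter]
    have hsub : (Finset.Ico 1 k).filter (fun j => j ≤ N) ⊆ Finset.Icc 1 N := by
      intro j hj
      simp only [Finset.mem_filter, Finset.mem_Ico, Finset.mem_Icc] at hj ⊢
      exact ⟨hj.1.1, hj.2⟩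
    have hcard : ((Finset.Ico 1 k).filter (fun j => j ≤ N)).card ≤ N := by
      have := Finset.card_le_card hsub
      simpa [Nat.card_Icc] using this
    rw [Finset.sum_const, nsmul_eq_mul]
    calc (((Finset.Ico 1 k).filter (fun j => j ≤ N)).card : ℝ) * α₀ ≤ (N:ℝ) * α₀ :=
        mul_le_mul_of_nonneg_right (by exact_mod_cast hcard) hα₀.le
      _ = α₀ * N := mul_comm _ _
  have hb1 : (0:ℝ) < 1 - β := by linarith
  have hsumpow : ∀ k : ℕ, 1 ≤ k →
      ((k:ℝ) ^ (1 - β) - 1) / (1 - β) ≤ ∑ j ∈ Finset.Ico 1 k, (j:ℝ) ^ (-β) := by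
    intro k hk
    have hanti : AntitoneOn (fun y : ℝ => y ^ (-β))
        (Set.Icc 1 (1 + ((k - 1 : ℕ) : ℝ))) := by
      intro u hu v hv huv
      exact Real.rpow_le_rpow_of_nonpos (lt_of_lt_of_le zero_lt_one hu.1)
        huv (neg_nonpos.2 hβ0.le)
    have hint := hanti.integral_le_sum
    have hcast : (1:ℝ) + ((k - 1 : ℕ):ℝ) = (k:ℝ) := by
      push_cast [Nat.cast_sub hk]
      ring
    have hival : (∫ y in (1:ℝ)..(1 + ((k - 1 : ℕ):ℝ)), y ^ (-β))
        = ((k:ℝ) ^ (1 - β) - 1) / (1 - β) := by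
      rw [hcast, integral_rpow (Or.inl (by linarith : (-1:ℝ) < -β))]
      rw [show -β + 1 = 1 - β by ring, Real.one_rpow]
    have hsum_eq : ∑ j ∈ Finset.Ico 1 k, (j:ℝ) ^ (-β)
        = ∑ i ∈ Finset.range (k - 1), ((1:ℝ) + (i:ℝ)) ^ (-β) := by
      rw [Finset.sum_Ico_eq_sum_range]
      apply Finset.sum_congr rfl
      intro i _
      push_cast
      norm_num
    rw [hsum_eq, ← hival]
    exact hint
  have hsumt : ∀ k : ℕ, 1 ≤ k →
      α₀ / (1 - β) * (k:ℝ) ^ (1 - β) - (α₀ / (1 - β) + α₀ * N) ≤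
        ∑ j ∈ Finset.Ico 1 k, t j := by
    intro k hk
    have h1 : ∑ j ∈ Finset.Ico 1 k, (α₀ * (j:ℝ) ^ (-β) - (if j ≤ N then α₀ else 0))
        ≤ ∑ j ∈ Finset.Ico 1 k, t j :=
      Finset.sum_le_sum (fun j hj => ht_ge j (Finset.mem_Ico.1 hj).1)
    rw [Finset.sum_sub_distrib, ← Finset.mul_sum] at h1
    have h2 := hsumpow k hk
    have h3 := hite k
    have h4 : α₀ * (((k:ℝ) ^ (1-β) - 1) / (1 - β)) ≤
        α₀ * ∑ j ∈ Finset.Ico 1 k, (j:ℝ) ^ (-β) :=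
      mul_le_mul_of_nonneg_left h2 hα₀.le
    have hid : α₀ * (((k:ℝ) ^ (1-β) - 1) / (1 - β))
        = α₀ / (1 - β) * (k:ℝ) ^ (1 - β) - α₀ / (1 - β) := by
      field_simp
    linarith
  refine ⟨Real.exp (α₀ / (1 - β) + α₀ * N), ?_⟩
  intro k hk
  have h1 := hMprod k hk
  have h2 := hprodexp k
  have h3 := hsumt k hk
  have hB2 : (0:ℝ) ≤ B ^ 2 := sq_nonneg B
  have h4 : M k ≤ Real.exp (-(∑ j ∈ Finset.Ico 1 k, t j)) * B ^ 2 :=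
    le_trans h1 (mul_le_mul_of_nonneg_right h2 hB2)
  have h5 : Real.exp (-(∑ j ∈ Finset.Ico 1 k, t j)) ≤
      Real.exp (α₀ / (1 - β) + α₀ * N) *
        Real.exp (-(α₀ / (1 - β)) * (k:ℝ) ^ (1 - β)) := by
    rw [← Real.exp_add]
    apply Real.exp_le_exp.2
    linarith
  have h6 : Real.exp (-(α₀ / (1 - β)) * (k:ℝ) ^ (1 - β)) ≤
      max (Real.exp (-(k:ℝ) / m))
        (Real.exp (-(α₀ / (1 - β)) * (k:ℝ) ^ (1 - β))) := le_max_right _ _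
  calc M k ≤ Real.exp (-(∑ j ∈ Finset.Ico 1 k, t j)) * B ^ 2 := h4
    _ ≤ (Real.exp (α₀ / (1 - β) + α₀ * N) *
          Real.exp (-(α₀ / (1 - β)) * (k:ℝ) ^ (1 - β))) * B ^ 2 :=
        mul_le_mul_of_nonneg_right h5 hB2
    _ ≤ (Real.exp (α₀ / (1 - β) + α₀ * N) * max (Real.exp (-(k:ℝ) / m))
          (Real.exp (-(α₀ / (1 - β)) * (k:ℝ) ^ (1 - β)))) * B ^ 2 :=
        mul_le_mul_of_nonneg_right
          (mul_le_mul_of_nonneg_left h6 (Real.exp_nonneg _)) hB2
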